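/- Let G = (V,E) be a finite graph and let a, b be distinct vertices such that a is the only neighbor of b (b has degree 1). Then the multivariate independent set polynomial satisfies I(G; x) = (1 + x_b) · I(G - b; y), where G - b is G with vertex b deleted, y_a = x_a/(1 + x_b), and y_v = x_v for all other vertices v. (Equivalently, as a polynomial identity: I(G; x) with variables x_a, x_b equals (1+x_b) times I(G-b) with the variable at a replaced by x_a/(1+x_b), after clearing denominators.) -/

import Mathlib

open Finset
open scoped Classical

/-- A finset of vertices is independent in `G` if no two of its members are adjacent. -/
def IndepSet {V : Type*} (G : SimpleGraph V) (A : Finset V) : Prop :=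
  ∀ u ∈ A, ∀ v ∈ A, ¬ G.Adj u v

/-- The multivariate independent set polynomial `I(G; x)`, evaluated at real vertex weights. -/
noncomputable def indPoly {V : Type*} [Fintype V] (G : SimpleGraph V) (x : V → ℝ) : ℝ :=
  ∑ A : Finset V, if IndepSet G A then ∏ v ∈ A, x v else 0

/-- The independent set polynomial of `G - b` (vertex `b` deleted): sum over independent
sets avoiding `b` (independence in `G - b` agrees with independence in `G` for such sets). -/
noncomputable def indPolyDel {V : Type*} [Fintype V] [DecidableEq V]
    (G : SimpleGraph V) (b : V) (y : V → ℝ) : ℝ :=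
  ∑ A ∈ (Finset.univ.erase b).powerset, if IndepSet G A then ∏ v ∈ A, y v else 0

/-- Leaf reduction: if `a` is the only neighbor of the degree-1 vertex `b`, then
`I(G; x) = (1 + x_b) · I(G - b; y)` where `y_a = x_a / (1 + x_b)` and `y_v = x_v` otherwise. -/
theorem leaf_reduction {V : Type*} [Fintype V] [DecidableEq V]
    (G : SimpleGraph V) (a b : V) (hab : a ≠ b) (hadj : G.Adj a b)
    (honly : ∀ v, G.Adj v b → v = a) (x : V → ℝ) (hx : 1 + x b ≠ 0) :
    indPoly G x
      = (1 + x b) * indPolyDel G b (Function.update x a (x a / (1 + x b))) := by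
  classical
  set y := Function.update x a (x a / (1 + x b)) with hy
  have hbnot : b ∉ (Finset.univ.erase b) := Finset.notMem_erase b _
  have hLHS : indPoly G x =
      ∑ A ∈ (Finset.univ.erase b).powerset,
        ((if IndepSet G A then ∏ v ∈ A, x v else 0)
          + (if IndepSet G (insert b A) then ∏ v ∈ insert b A, x v else 0)) := by
    rw [indPoly, ← Finset.powerset_univ]
    have hup : (Finset.univ : Finset V).powerset
        = (insert b (Finset.univ.erase b)).powerset := by
      rw [Finset.insert_erase (Finset.mem_univ b)]
    rw [hup, Finset.sum_powerset_insert hbnot, Finset.sum_add_distrib]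
  rw [hLHS, indPolyDel, Finset.mul_sum]
  apply Finset.sum_congr rfl
  intro A hA
  have hbA : b ∉ A := fun h => hbnot (Finset.mem_powerset.mp hA h)
  have hprod_ins : ∏ v ∈ insert b A, x v = x b * ∏ v ∈ A, x v :=
    Finset.prod_insert hbA
  by_cases hI : IndepSet G A
  · by_cases haA : a ∈ A
    · -- insert b A not independent
      have hnI : ¬ IndepSet G (insert b A) := by
        intro h
        exact h a (Finset.mem_insert_of_mem haA) b (Finset.mem_insert_self b A) hadj
      have hyA : ∏ v ∈ A, y v = (x a / (1 + x b)) * ∏ v ∈ A.erase a, x v := by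
        rw [← Finset.prod_erase_mul A y haA]
        have h1 : y a = x a / (1 + x b) := Function.update_self _ _ _
        have h2 : ∏ v ∈ A.erase a, y v = ∏ v ∈ A.erase a, x v := by
          apply Finset.prod_congr rfl
          intro v hv
          exact Function.update_of_ne (Finset.ne_of_mem_erase hv) _ _
        rw [h1, h2, mul_comm]
      have hxA : ∏ v ∈ A, x v = x a * ∏ v ∈ A.erase a, x v := by
        rw [← Finset.prod_erase_mul A x haA, mul_comm]
      rw [if_pos hI, if_neg hnI, if_pos hI, hyA, hxA]
      field_simp
      ring
    · -- insert b A independent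
      have hnI : IndepSet G (insert b A) := by
        intro u hu v hv hadj'
        rcases Finset.mem_insert.mp hu with hub | hu'
        · rcases Finset.mem_insert.mp hv with hvb | hv'
          · rw [hub, hvb] at hadj'; exact G.loopless.irrefl b hadj'
          · subst hub
            have hva := honly v hadj'.symm
            subst hva
            exact haA hv'
        · rcases Finset.mem_insert.mp hv with hvb | hv'
          · subst hvb
            have hua := honly u hadj'
            subst hua
            exact haA hu'
          · exact hI u hu' v hv' hadj'
      have hyA : ∏ v ∈ A, y v = ∏ v ∈ A, x v := by
        apply Finset.prod_congr rfl
        intro v hv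
        exact Function.update_of_ne (fun h : v = a => haA (h ▸ hv)) _ _
      rw [if_pos hI, if_pos hnI, if_pos hI, hyA, hprod_ins]
      ring
  · have hnI : ¬ IndepSet G (insert b A) := fun h => hI (fun u hu v hv =>
      h u (Finset.mem_insert_of_mem hu) v (Finset.mem_insert_of_mem hv))
    rw [if_neg hI, if_neg hnI, if_neg hI]
    ring
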